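/- arXiv:1707.04151 — 4 statements merged into one kernel-verified Lean document; each statement's English description precedes it below -/
import Mathlib

section
/- Let H = (M, n, R) be a constant-rate multi-mode system and let S ⊆ ℝⁿ be an open, convex set. For any two points x_s ∈ S and x_t ∈ S, there exists an S-safe finite schedule steering H from x_s to x_t if and only if there exists a function t : M → ℝ with t(m) ≥ 0 for all m ∈ M such that x_s + Σ_{m ∈ M} t(m) · R(m) = x_t. -/
/-- The terminal state of the run of a schedule (a list of timed actions) from a state. -/
def runEnd {M V : Type*} [AddCommGroup V] [Module ℝ V] (R : M → V) : V → List (M × ℝ) → V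
  | x, [] => x
  | x, (m, t) :: σ => runEnd R (x + t • R m) σ

/-- A schedule is `S`-safe from `x` if every point visited during its run
(including along each timed action) lies in `S`. -/
def SafeSched {M V : Type*} [AddCommGroup V] [Module ℝ V] (R : M → V) (S : Set V) :
    V → List (M × ℝ) → Prop
  | _, [] => True
  | x, (m, t) :: σ =>
      (∀ τ ∈ Set.Icc (0 : ℝ) t, x + τ • R m ∈ S) ∧ SafeSched R S (x + t • R m) σ

section aux
variable {M : Type*} {V : Type*} [NormedAddCommGroup V] [NormedSpace ℝ V] (R : M → V)

lemma runEnd_eq (σ : List (M × ℝ)) (x : V) :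
    runEnd R x σ = x + (σ.map (fun p => p.2 • R p.1)).sum := by
  induction σ generalizing x with
  | nil => simp [runEnd]
  | cons p σ ih => obtain ⟨m, t⟩ := p; simp [runEnd, ih, add_assoc]

lemma safeSched_append (S : Set V) (L₁ L₂ : List (M × ℝ)) (x : V)
    (h₁ : SafeSched R S x L₁) (h₂ : SafeSched R S (runEnd R x L₁) L₂) :
    SafeSched R S x (L₁ ++ L₂) := by
  induction L₁ generalizing x with
  | nil => simpa [runEnd] using h₂
  | cons p L ih =>
    obtain ⟨m, t⟩ := p
    exact ⟨h₁.1, ih _ h₁.2 h₂⟩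

lemma runEnd_append (L₁ L₂ : List (M × ℝ)) (x : V) :
    runEnd R x (L₁ ++ L₂) = runEnd R (runEnd R x L₁) L₂ := by
  induction L₁ generalizing x with
  | nil => simp [runEnd]
  | cons p L ih => obtain ⟨m, t⟩ := p; simp [runEnd, ih]

lemma safe_of_ball (S : Set V) (σ : List (M × ℝ)) (x : V)
    (hnn : ∀ p ∈ σ, 0 ≤ p.2)
    (hball : ∀ y : V, ‖y - x‖ ≤ (σ.map (fun p => p.2 * ‖R p.1‖)).sum → y ∈ S) :
    SafeSched R S x σ := by
  induction σ generalizing x with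
  | nil => trivial
  | cons p σ ih =>
    obtain ⟨m, t⟩ := p
    have ht : 0 ≤ t := hnn (m, t) (by simp)
    have hsum : (0:ℝ) ≤ (σ.map (fun p => p.2 * ‖R p.1‖)).sum := by
      apply List.sum_nonneg
      intro a ha
      simp only [List.mem_map] at ha
      obtain ⟨q, hq, rfl⟩ := ha
      exact mul_nonneg (hnn q (List.mem_cons_of_mem _ hq)) (norm_nonneg _)
    constructor
    · intro τ hτ
      apply hball
      rw [add_sub_cancel_left, norm_smul, Real.norm_eq_abs, abs_of_nonneg hτ.1]
      simp only [List.map_cons, List.sum_cons]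
      have : τ * ‖R m‖ ≤ t * ‖R m‖ := mul_le_mul_of_nonneg_right hτ.2 (norm_nonneg _)
      linarith
    · apply ih _ (fun p hp => hnn p (List.mem_cons_of_mem _ hp))
      intro y hy
      apply hball
      have h1 : ‖y - x‖ ≤ ‖y - (x + t • R m)‖ + ‖x + t • R m - x‖ := by
        simpa using norm_sub_le_norm_sub_add_norm_sub y (x + t • R m) x
      have h2 : ‖x + t • R m - x‖ = t * ‖R m‖ := by
        rw [add_sub_cancel_left, norm_smul, Real.norm_eq_abs, abs_of_nonneg ht]
      simp only [List.map_cons, List.sum_cons]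
      linarith

lemma exists_times (σ : List (M × ℝ)) [Fintype M] (hnn : ∀ p ∈ σ, 0 ≤ p.2) (x : V) :
    ∃ t : M → ℝ, (∀ m, 0 ≤ t m) ∧ x + ∑ m, t m • R m = runEnd R x σ := by
  classical
  induction σ generalizing x with
  | nil => exact ⟨0, fun m => le_refl _, by simp [runEnd]⟩
  | cons p σ ih =>
    obtain ⟨m₀, s⟩ := p
    have hs : 0 ≤ s := hnn (m₀, s) (by simp)
    obtain ⟨t', ht'nn, ht'⟩ := ih (fun p hp => hnn p (List.mem_cons_of_mem _ hp)) (x + s • R m₀)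
    refine ⟨fun m => t' m + if m = m₀ then s else 0,
      fun m => add_nonneg (ht'nn m) (by split_ifs <;> simp [hs]), ?_⟩
    have hsum : ∑ m, (t' m + if m = m₀ then s else 0) • R m
        = (∑ m, t' m • R m) + s • R m₀ := by
      simp only [add_smul, Finset.sum_add_distrib, ite_smul, zero_smul]
      rw [Finset.sum_ite_eq' Finset.univ m₀ (fun m => s • R m)]
      simp
    rw [hsum, runEnd]
    rw [← ht']
    abel
end aux


/-- Theorem of Alur, Trivedi and Wojtczak: for an open convex safety set `S` and
`x_s, x_t ∈ S`, an `S`-safe schedule from `x_s` to `x_t` exists iff there are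
nonnegative dwell times `t : M → ℝ` with `x_s + ∑ m, t m • R m = x_t`. -/
theorem stmt0 {M : Type*} [Fintype M] [Nonempty M] {n : ℕ} (hn : 0 < n)
    (R : M → (Fin n → ℝ)) (S : Set (Fin n → ℝ))
    (hSopen : IsOpen S) (hSconv : Convex ℝ S)
    (xs xt : Fin n → ℝ) (hxs : xs ∈ S) (hxt : xt ∈ S) :
    (∃ σ : List (M × ℝ), (∀ p ∈ σ, 0 ≤ p.2) ∧ SafeSched R S xs σ ∧ runEnd R xs σ = xt) ↔
      (∃ t : M → ℝ, (∀ m, 0 ≤ t m) ∧ xs + ∑ m, t m • R m = xt) := by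
  classical
  constructor
  · rintro ⟨σ, hnn, -, hend⟩
    obtain ⟨t, htnn, ht⟩ := exists_times R σ hnn xs
    exact ⟨t, htnn, ht.trans hend⟩
  · rintro ⟨t, htnn, ht⟩
    set d := xt - xs with hd
    have hdsum : ∑ m, t m • R m = d := by rw [hd, ← ht]; abel
    set seg := segment ℝ xs xt with hseg
    have hsegS : seg ⊆ S := hSconv.segment_subset hxs hxt
    have hsegc : IsCompact seg := by
      rw [hseg, segment_eq_image']
      exact isCompact_Icc.image (by fun_prop)
    obtain ⟨δ, hδpos, hδ⟩ := hsegc.exists_thickening_subset_open hSopen hsegS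
    set C := ∑ m, t m * ‖R m‖ with hCdef
    have hC : 0 ≤ C := Finset.sum_nonneg fun m _ => mul_nonneg (htnn m) (norm_nonneg _)
    obtain ⟨K, hK⟩ := exists_nat_gt (C / δ)
    have hKpos : 0 < (K : ℝ) := lt_of_le_of_lt (div_nonneg hC hδpos.le) hK
    have hCK : C / K < δ := by
      rw [div_lt_iff₀ hKpos]
      calc C = (C / δ) * δ := by field_simp
        _ < K * δ := by exact mul_lt_mul_of_pos_right hK hδpos
        _ = δ * K := mul_comm _ _
    set cyc : List (M × ℝ) := Finset.univ.toList.map (fun m => (m, t m / K)) with hcyc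
    have hcnn : ∀ p ∈ cyc, 0 ≤ p.2 := by
      intro p hp
      rw [hcyc, List.mem_map] at hp
      obtain ⟨m, -, rfl⟩ := hp
      exact div_nonneg (htnn m) hKpos.le
    have hcost : (cyc.map (fun p => p.2 * ‖R p.1‖)).sum = C / K := by
      rw [hcyc, List.map_map]
      show (Finset.univ.toList.map (fun m => (t m / K) * ‖R m‖)).sum = C / K
      rw [Finset.sum_map_toList, hCdef, Finset.sum_div]
      congr 1; ext m; ring
    have hdisp : (cyc.map (fun p => p.2 • R p.1)).sum = ((K:ℝ)⁻¹) • d := by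
      rw [hcyc, List.map_map]
      show (Finset.univ.toList.map (fun m => (t m / K) • R m)).sum = ((K:ℝ)⁻¹) • d
      rw [Finset.sum_map_toList, ← hdsum, Finset.smul_sum]
      congr 1; ext m
      rw [smul_smul, div_eq_inv_mul]
    -- membership of points on the segment
    have hmem : ∀ j : ℕ, j ≤ K → xs + ((j : ℝ) / K) • d ∈ seg := by
      intro j hj
      rw [hseg, segment_eq_image']
      refine ⟨(j : ℝ) / K, ⟨div_nonneg (Nat.cast_nonneg j) hKpos.le, ?_⟩, rfl⟩
      rw [div_le_one hKpos]
      exact_mod_cast hj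
    set cycles : ℕ → List (M × ℝ) := fun k => (List.replicate k cyc).flatten with hcycles
    have key : ∀ k j : ℕ, j + k = K →
        SafeSched R S (xs + ((j : ℝ) / K) • d) (cycles k) ∧
        runEnd R (xs + ((j : ℝ) / K) • d) (cycles k) = xt := by
      intro k
      induction k with
      | zero =>
        intro j hj
        refine ⟨trivial, ?_⟩
        show runEnd R _ [] = xt
        rw [runEnd]
        have hjK : (j : ℝ) = K := by exact_mod_cast (by omega : j = K)
        rw [hjK, div_self hKpos.ne', one_smul, hd]
        abel
      | succ k ih =>
        intro j hj
        have hjK : j ≤ K := by omega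
        have hsafe : SafeSched R S (xs + ((j : ℝ) / K) • d) cyc := by
          apply safe_of_ball R S cyc _ hcnn
          intro y hy
          rw [hcost] at hy
          apply hδ
          rw [Metric.mem_thickening_iff]
          exact ⟨_, hmem j hjK, lt_of_le_of_lt (by rwa [dist_eq_norm]) hCK⟩
        have hstep : runEnd R (xs + ((j : ℝ) / K) • d) cyc
            = xs + (((j : ℕ) + 1 : ℝ) / K) • d := by
          rw [runEnd_eq, hdisp, add_assoc, ← add_smul]
          congr 2
          have hK0 : (K : ℝ) ≠ 0 := hKpos.ne'
          field_simp
        have hrec := ih (j + 1) (by omega)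
        push_cast at hrec hstep
        constructor
        · show SafeSched R S _ (cyc ++ cycles k)
          apply safeSched_append R S cyc (cycles k) _ hsafe
          rw [hstep]
          exact hrec.1
        · show runEnd R _ (cyc ++ cycles k) = xt
          rw [runEnd_append, hstep]
          exact hrec.2
    have h0 := key K 0 (by omega)
    simp only [Nat.cast_zero, zero_div, zero_smul, add_zero] at h0
    refine ⟨cycles K, ?_, h0.1, h0.2⟩
    intro p hp
    rw [hcycles, List.mem_flatten] at hp
    obtain ⟨l, hl, hpl⟩ := hp
    rw [List.mem_replicate] at hl
    exact hcnn p (hl.2 ▸ hpl)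
end

section
/- Let H = (M, n, R) be a constant-rate multi-mode system, S ⊆ ℝⁿ an open set, C a cell cover of S, and x_s, x_t ∈ S. There exists a witness channel in S for (H, x_s, x_t) if and only if there exists a witness channel for (H, x_s, x_t) all of whose cells belong to C. -/
/-- A cell of `S` is an open, convex subset of `S`. -/
def IsCell {n : ℕ} (S c : Set (Fin n → ℝ)) : Prop :=
  IsOpen c ∧ Convex ℝ c ∧ c ⊆ S

/-- A cell cover of `S` is a collection of cells of `S` whose union equals `S`. -/
def IsCellCover {n : ℕ} (S : Set (Fin n → ℝ)) (C : Set (Set (Fin n → ℝ))) : Prop :=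
  (∀ c ∈ C, IsCell S c) ∧ ⋃₀ C = S

/-- `c 1, …, c N` is a channel in `S`: a finite sequence of cells of `S` in which
consecutive cells intersect. -/
def IsChannel {n : ℕ} (S : Set (Fin n → ℝ)) (N : ℕ) (c : ℕ → Set (Fin n → ℝ)) : Prop :=
  1 ≤ N ∧ (∀ i, 1 ≤ i → i ≤ N → IsCell S (c i)) ∧
    ∀ i, 1 ≤ i → i < N → (c i ∩ c (i + 1)).Nonempty

/-- The channel `c 1, …, c N` is a witness to reachability for `(H, x_s, x_t)`. -/
def IsWitness {M : Type*} [Fintype M] {n : ℕ} (R : M → (Fin n → ℝ))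
    (xs xt : Fin n → ℝ) (N : ℕ) (c : ℕ → Set (Fin n → ℝ)) : Prop :=
  ∃ x : ℕ → (Fin n → ℝ),
    x 0 = xs ∧ x N = xt ∧ x 0 ∈ c 1 ∧ x N ∈ c N ∧
    (∀ i, 1 ≤ i → i < N → x i ∈ c i ∩ c (i + 1)) ∧
    ∃ t : ℕ → M → ℝ, (∀ i m, 0 ≤ t i m) ∧
      ∀ i, 1 ≤ i → i ≤ N → x i = x (i - 1) + ∑ m, t i m • R m

/-- There is a witness channel from `a` to `b` all of whose cells belong to `C`. -/
def GoodW {M : Type*} [Fintype M] {n : ℕ} (R : M → (Fin n → ℝ)) (S : Set (Fin n → ℝ))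
    (C : Set (Set (Fin n → ℝ))) (a b : Fin n → ℝ) : Prop :=
  ∃ (N : ℕ) (c : ℕ → Set (Fin n → ℝ)), IsChannel S N c ∧
    (∀ i, 1 ≤ i → i ≤ N → c i ∈ C) ∧ IsWitness R a b N c

/-- The segment lemma: if `b = a + ∑ t m • R m` with the segment `[a,b]` inside `S`,
then there is a `C`-witness channel from `a` to `b`. -/
lemma goodW_of_segment {M : Type*} [Fintype M] {n : ℕ} (R : M → (Fin n → ℝ))
    (S : Set (Fin n → ℝ)) (C : Set (Set (Fin n → ℝ))) (hC : IsCellCover S C)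
    (a b : Fin n → ℝ) (hseg : segment ℝ a b ⊆ S)
    (t : M → ℝ) (ht : ∀ m, 0 ≤ t m) (hb : b = a + ∑ m, t m • R m) :
    GoodW R S C a b := by
  have hcomp : IsCompact (segment ℝ a b) := by
    rw [segment_eq_image']
    exact isCompact_Icc.image (by continuity)
  obtain ⟨δ, hδ, hball⟩ := lebesgue_number_lemma_of_metric_sUnion hcomp
    (fun d hd => (hC.1 d hd).1) (by rw [hC.2]; exact hseg)
  obtain ⟨k₀, hk₀⟩ := exists_nat_gt (dist b a / δ)
  set k : ℕ := max k₀ 1 with hk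
  have hk1 : 1 ≤ k := le_max_right _ _
  have hkpos : (0:ℝ) < k := by positivity
  have hdk : dist b a / k < δ := by
    rw [div_lt_iff₀ hkpos]
    rw [div_lt_iff₀ hδ] at hk₀
    have hle : (k₀ : ℝ) ≤ (k : ℝ) := by exact_mod_cast le_max_left k₀ 1
    nlinarith [hδ.le]
  -- the points
  set x : ℕ → (Fin n → ℝ) := fun j => a + ((j : ℝ) / k) • (b - a) with hx
  have hxseg : ∀ j : ℕ, j ≤ k → x j ∈ segment ℝ a b := by
    intro j hj
    rw [segment_eq_image']
    exact ⟨(j : ℝ) / k, ⟨by positivity, by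
      rw [div_le_one hkpos]; exact_mod_cast hj⟩, rfl⟩
  have hstep : ∀ j : ℕ, 1 ≤ j → x j = x (j - 1) + ((1 : ℝ) / k) • (b - a) := by
    intro j hj
    have hcast : ((j - 1 : ℕ) : ℝ) = (j : ℝ) - 1 := by
      rw [Nat.cast_sub hj]; simp
    simp only [hx, hcast]
    rw [add_assoc, ← add_smul]
    ring_nf
  have hdist : ∀ j : ℕ, 1 ≤ j → dist (x j) (x (j - 1)) < δ := by
    intro j hj
    rw [hstep j hj, dist_eq_norm, add_sub_cancel_left, norm_smul]
    simp only [norm_div, norm_one, Real.norm_natCast]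
    rw [← dist_eq_norm]
    calc 1 / (k : ℝ) * dist b a = dist b a / k := by ring
    _ < δ := hdk
  -- choose cells
  have H : ∀ j : ℕ, 1 ≤ j → j ≤ k → ∃ d ∈ C, Metric.ball (x (j - 1)) δ ⊆ d := by
    intro j hj hjk
    exact hball (x (j - 1)) (hxseg (j - 1) (le_trans (Nat.sub_le _ _) hjk))
  choose! d hdC hdball using H
  have hxd : ∀ j : ℕ, 1 ≤ j → j ≤ k → x (j - 1) ∈ d j ∧ x j ∈ d j := by
    intro j hj hjk
    exact ⟨hdball j hj hjk (Metric.mem_ball_self hδ),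
      hdball j hj hjk (by rw [Metric.mem_ball]; exact hdist j hj)⟩
  refine ⟨k, d, ⟨hk1, fun i h1 h2 => hC.1 _ (hdC i h1 h2), ?_⟩, hdC, ?_⟩
  · intro i h1 h2
    refine ⟨x i, ((hxd i h1 h2.le).2), ?_⟩
    have := (hxd (i + 1) (by omega) (by omega)).1
    simpa using this
  · refine ⟨x, by simp [hx], ?_, ?_, (hxd k hk1 le_rfl).2, ?_, ?_⟩
    · simp only [hx]
      rw [div_self hkpos.ne', one_smul]
      abel
    · have := (hxd 1 le_rfl hk1).1
      simpa using this
    · intro i h1 h2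
      refine ⟨(hxd i h1 h2.le).2, ?_⟩
      have := (hxd (i + 1) (by omega) (by omega)).1
      simpa using this
    · refine ⟨fun j m => t m / k, fun j m => div_nonneg (ht m) hkpos.le, ?_⟩
      intro i h1 h2
      rw [hstep i h1]
      congr 1
      have hba : b - a = ∑ m, t m • R m := by rw [hb]; abel
      rw [hba, Finset.smul_sum]
      refine Finset.sum_congr rfl fun m _ => ?_
      rw [smul_smul, one_div, inv_mul_eq_div]
/-- Concatenation of `C`-witness channels. -/
lemma goodW_trans {M : Type*} [Fintype M] {n : ℕ} {R : M → (Fin n → ℝ)} {S : Set (Fin n → ℝ)}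
    {C : Set (Set (Fin n → ℝ))} {a b e : Fin n → ℝ}
    (h1 : GoodW R S C a b) (h2 : GoodW R S C b e) : GoodW R S C a e := by
  obtain ⟨N₁, c₁, ⟨hN₁, hcell₁, -⟩, hC₁, x₁, hx₁0, hx₁N, hx₁c1, hx₁cN, hmid₁, t₁, ht₁, hdyn₁⟩ := h1
  obtain ⟨N₂, c₂, ⟨hN₂, hcell₂, -⟩, hC₂, x₂, hx₂0, hx₂N, hx₂c1, hx₂cN, hmid₂, t₂, ht₂, hdyn₂⟩ := h2
  set N := N₁ + N₂ with hN
  set c : ℕ → Set (Fin n → ℝ) := fun i => if i ≤ N₁ then c₁ i else c₂ (i - N₁) with hc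
  set x : ℕ → (Fin n → ℝ) := fun i => if i ≤ N₁ then x₁ i else x₂ (i - N₁) with hx
  set t : ℕ → M → ℝ := fun i => if i ≤ N₁ then t₁ i else t₂ (i - N₁) with ht
  have hxb : x N₁ = b := by simp [hx, hx₁N]
  have hxmid : ∀ i, 1 ≤ i → i < N → x i ∈ c i ∩ c (i + 1) := by
    intro i h1i h2i
    rcases lt_trichotomy i N₁ with h | h | h
    · have : i + 1 ≤ N₁ := h
      simp only [hx, hc, if_pos h.le, if_pos this]
      exact hmid₁ i h1i h
    · subst h
      constructor
      · simp only [hx, hc, if_pos le_rfl]; exact hx₁cN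
      · simp only [hx, hc, if_pos le_rfl, if_neg (by omega : ¬ i + 1 ≤ i)]
        rw [hx₁N, ← hx₂0]
        simpa using hx₂c1
    · have h1' : ¬ i ≤ N₁ := by omega
      have h2' : ¬ i + 1 ≤ N₁ := by omega
      simp only [hx, hc, if_neg h1', if_neg h2']
      have : i + 1 - N₁ = (i - N₁) + 1 := by omega
      rw [this]
      exact hmid₂ (i - N₁) (by omega) (by omega)
  refine ⟨N, c, ⟨by omega, ?_, ?_⟩, ?_, x, ?_, ?_, ?_, ?_, hxmid, ?_⟩
  · intro i h1i h2i
    simp only [hc]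
    split
    · exact hcell₁ i h1i (by assumption)
    · exact hcell₂ _ (by omega) (by omega)
  · intro i h1i h2i
    exact ⟨x i, hxmid i h1i h2i⟩
  · intro i h1i h2i
    simp only [hc]
    split
    · exact hC₁ i h1i (by assumption)
    · exact hC₂ _ (by omega) (by omega)
  · simp only [hx, if_pos (by omega : 0 ≤ N₁)]; exact hx₁0
  · simp only [hx, if_neg (by omega : ¬ N ≤ N₁)]
    have : N - N₁ = N₂ := by omega
    rw [this]; exact hx₂N
  · simp only [hx, hc, if_pos (by omega : 0 ≤ N₁), if_pos hN₁]
    exact hx₁c1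
  · simp only [hx, hc, if_neg (by omega : ¬ N ≤ N₁)]
    have : N - N₁ = N₂ := by omega
    rw [this]; exact hx₂cN
  · refine ⟨t, fun i m => by simp only [ht]; split <;> [exact ht₁ _ _; exact ht₂ _ _], ?_⟩
    intro i h1i h2i
    rcases le_or_gt i N₁ with h | h
    · have : i - 1 ≤ N₁ := by omega
      simp only [hx, ht, if_pos h, if_pos this]
      exact hdyn₁ i h1i h
    · have h1' : ¬ i ≤ N₁ := by omega
      simp only [hx, ht, if_neg h1']
      rcases eq_or_lt_of_le (show N₁ + 1 ≤ i by omega) with h' | h'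
      · have hi1 : i - 1 = N₁ := by omega
        have hiN : i - N₁ = 1 := by omega
        rw [hi1, hiN, if_pos le_rfl, hx₁N, ← hx₂0]
        simpa using hdyn₂ 1 le_rfl (by omega)
      · have : ¬ i - 1 ≤ N₁ := by omega
        rw [if_neg this]
        have h3 : i - 1 - N₁ = (i - N₁) - 1 := by omega
        rw [h3]
        exact hdyn₂ (i - N₁) (by omega) (by omega)

/-- For an open safety set `S` with cell cover `C`, there is a witness channel in `S`
for `(H, x_s, x_t)` iff there is a witness channel all of whose cells belong to `C`. -/
theorem stmt5 {M : Type*} [Fintype M] [Nonempty M] {n : ℕ} (hn : 0 < n)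
    (R : M → (Fin n → ℝ)) (S : Set (Fin n → ℝ)) (hSopen : IsOpen S)
    (C : Set (Set (Fin n → ℝ))) (hC : IsCellCover S C)
    (xs xt : Fin n → ℝ) (hxs : xs ∈ S) (hxt : xt ∈ S) :
    (∃ (N : ℕ) (c : ℕ → Set (Fin n → ℝ)), IsChannel S N c ∧ IsWitness R xs xt N c) ↔
      (∃ (N : ℕ) (c : ℕ → Set (Fin n → ℝ)), IsChannel S N c ∧
        (∀ i, 1 ≤ i → i ≤ N → c i ∈ C) ∧ IsWitness R xs xt N c) := by
  constructor
  · rintro ⟨N, c, ⟨hN, hcell, -⟩, x, hx0, hxN, hxc1, hxcN, hmid, t, htpos, hdyn⟩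
    -- x k ∈ c k and x (k-1) ∈ c k for 1 ≤ k ≤ N
    have hmem2 : ∀ k, 1 ≤ k → k ≤ N → x k ∈ c k := by
      intro k h1 h2
      rcases eq_or_lt_of_le h2 with h | h
      · subst h; exact hxcN
      · exact (hmid k h1 h).1
    have hmem1 : ∀ k, 1 ≤ k → k ≤ N → x (k - 1) ∈ c k := by
      intro k h1 h2
      rcases eq_or_lt_of_le h1 with h | h
      · rw [← h]; simpa using hxc1
      · have := (hmid (k - 1) (by omega) (by omega)).2
        have hk : k - 1 + 1 = k := by omega
        rwa [hk] at this
    have hstep : ∀ k, 1 ≤ k → k ≤ N → GoodW R S C (x (k - 1)) (x k) := by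
      intro k h1 h2
      apply goodW_of_segment R S C hC _ _ _ (t k) (fun m => htpos k m) (hdyn k h1 h2)
      intro p hp
      exact (hcell k h1 h2).2.2
        ((hcell k h1 h2).2.1.segment_subset (hmem1 k h1 h2) (hmem2 k h1 h2) hp)
    have main : ∀ k, 1 ≤ k → k ≤ N → GoodW R S C (x 0) (x k) := by
      intro k
      induction k with
      | zero => omega
      | succ j ih =>
        intro h1 h2
        rcases Nat.eq_or_lt_of_le h1 with h | h
        · have := hstep 1 le_rfl (by omega)
          simpa [← h] using this
        · have hj : GoodW R S C (x 0) (x j) := ih (by omega) (by omega)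
          have := hstep (j + 1) (by omega) h2
          simp only [Nat.add_sub_cancel] at this
          exact goodW_trans hj this
    have := main N hN le_rfl
    rw [hx0, hxN] at this
    exact this
  · rintro ⟨N, c, h1, h2, h3⟩
    exact ⟨N, c, h1, h3⟩
end

section
/- Let H = (M, n, R) be a constant-rate multi-mode system, S ⊆ ℝⁿ an open set, C a cell cover of S, and x_s, x_t ∈ S. If there exists a finite S-safe schedule steering H from x_s to x_t, then there exists a witness channel ⟨c_1, …, c_N⟩ for (H, x_s, x_t) whose cells all belong to C and are pairwise distinct; in particular, if C is finite, then N ≤ |C|. -/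
section ChainAux

variable {M : Type*} [Fintype M] {n : ℕ}

/-- Chain data: a channel with cells in `C`, points, and nonnegative coefficients,
from `xs` to `y`. -/
def ChainTo (C : Set (Set (Fin n → ℝ))) (R : M → Fin n → ℝ) (xs y : Fin n → ℝ) (N : ℕ)
    (c : ℕ → Set (Fin n → ℝ)) (x : ℕ → Fin n → ℝ) (t : ℕ → M → ℝ) : Prop :=
  1 ≤ N ∧ (∀ i, 1 ≤ i → i ≤ N → c i ∈ C) ∧
  x 0 = xs ∧ x N = y ∧ x 0 ∈ c 1 ∧ x N ∈ c N ∧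
  (∀ i, 1 ≤ i → i < N → x i ∈ c i ∩ c (i + 1)) ∧
  (∀ i m, 0 ≤ t i m) ∧
  (∀ i, 1 ≤ i → i ≤ N → x i = x (i - 1) + ∑ m, t i m • R m)

def ChainEx (C : Set (Set (Fin n → ℝ))) (R : M → Fin n → ℝ) (xs y : Fin n → ℝ) : Prop :=
  ∃ N c x t, ChainTo C R xs y N c x t

lemma chain_single {C : Set (Set (Fin n → ℝ))} {R : M → Fin n → ℝ} {xs : Fin n → ℝ}
    {c0 : Set (Fin n → ℝ)} (hc0 : c0 ∈ C) (hx : xs ∈ c0) : ChainEx C R xs xs := by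
  refine ⟨1, fun _ => c0, fun _ => xs, fun _ _ => 0, ?_⟩
  refine ⟨le_refl 1, fun i _ _ => hc0, rfl, rfl, hx, hx, ?_, fun _ _ => le_refl 0, ?_⟩
  · intro i h1 h2; omega
  · intro i _ _; simp

lemma chain_append {C : Set (Set (Fin n → ℝ))} {R : M → Fin n → ℝ} {xs y : Fin n → ℝ}
    (h : ChainEx C R xs y) {d : Set (Fin n → ℝ)} (hd : d ∈ C) (hyd : y ∈ d)
    {z : Fin n → ℝ} (hzd : z ∈ d) {s : M → ℝ} (hs : ∀ m, 0 ≤ s m)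
    (hz : z = y + ∑ m, s m • R m) : ChainEx C R xs z := by
  obtain ⟨N, c, x, t, hN, hcC, hx0, hxN, hx0c, hxNc, hmid, ht0, hstep⟩ := h
  refine ⟨N + 1, fun i => if i ≤ N then c i else d, fun i => if i ≤ N then x i else z,
    fun i => if i ≤ N then t i else s, ?_⟩
  refine ⟨by omega, ?_, ?_, ?_, ?_, ?_, ?_, ?_, ?_⟩
  · intro i h1 h2
    by_cases hi : i ≤ N <;> simp [hi]
    · exact hcC i h1 hi
    · exact hd
  · simpa using hx0
  · simp
  · simp only [if_pos (Nat.zero_le N), if_pos hN]; exact hx0c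
  · simp [hzd]
  · intro i h1 h2
    rcases lt_or_eq_of_le (Nat.lt_succ_iff.mp h2) with hi | hi
    · have hi1 : i + 1 ≤ N := hi
      simp only [if_pos (le_of_lt hi), if_pos hi1]
      exact hmid i h1 hi
    · rw [hi]
      simp only [if_pos (le_refl N), if_neg (by omega : ¬ N + 1 ≤ N)]
      exact ⟨hxNc, hxN ▸ hyd⟩
  · intro i m; by_cases hi : i ≤ N <;> simp [hi]
    · exact ht0 i m
    · exact hs m
  · intro i h1 h2
    rcases lt_or_eq_of_le h2 with hi | hi
    · have hi' : i ≤ N := by omega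
      have hi'' : i - 1 ≤ N := by omega
      simp only [if_pos hi', if_pos hi'']
      exact hstep i h1 hi'
    · rw [hi]
      simp only [if_neg (by omega : ¬ N + 1 ≤ N), Nat.add_sub_cancel, if_pos (le_refl N)]
      rw [hxN]; exact hz

/-- Telescoping the step equations over an interval of indices. -/
lemma chain_telescope {C : Set (Set (Fin n → ℝ))} {R : M → Fin n → ℝ} {xs y : Fin n → ℝ}
    {N : ℕ} {c : ℕ → Set (Fin n → ℝ)} {x : ℕ → Fin n → ℝ} {t : ℕ → M → ℝ}
    (h : ChainTo C R xs y N c x t) {i : ℕ} (h1 : 1 ≤ i) :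
    ∀ j, i ≤ j → j ≤ N → x j = x (i - 1) + ∑ m, (∑ l ∈ Finset.Icc i j, t l m) • R m := by
  obtain ⟨hN, hcC, hx0, hxN, hx0c, hxNc, hmid, ht0, hstep⟩ := h
  intro j
  induction j with
  | zero => intro hij hjN; omega
  | succ j ih =>
    intro hij hjN
    rcases lt_or_eq_of_le hij with hij' | hij'
    · have hj : i ≤ j := by omega
      have hstep' := hstep (j + 1) (by omega) hjN
      rw [Nat.add_sub_cancel] at hstep'
      rw [hstep', ih hj (by omega)]
      have : ∀ m : M, (∑ l ∈ Finset.Icc i (j + 1), t l m) = (∑ l ∈ Finset.Icc i j, t l m) + t (j+1) m := by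
        intro m
        have hins : Finset.Icc i (j + 1) = insert (j + 1) (Finset.Icc i j) := by
          ext a; simp only [Finset.mem_Icc, Finset.mem_insert]; omega
        rw [hins, Finset.sum_insert (by simp)]
        ring
      simp only [this, add_smul, Finset.sum_add_distrib]
      abel
    · rw [← hij']
      have := hstep i h1 (by omega)
      simpa using this

/-- Shortening a chain whose cells repeat. -/
lemma chain_shorten {C : Set (Set (Fin n → ℝ))} {R : M → Fin n → ℝ} {xs y : Fin n → ℝ}
    {N : ℕ} {c : ℕ → Set (Fin n → ℝ)} {x : ℕ → Fin n → ℝ} {t : ℕ → M → ℝ}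
    (h : ChainTo C R xs y N c x t) {i0 j0 : ℕ} (h1 : 1 ≤ i0) (hij : i0 < j0)
    (hjN : j0 ≤ N) (hcc : c i0 = c j0) :
    ∃ c' x' t', ChainTo C R xs y (N - (j0 - i0)) c' x' t' := by
  classical
  have htel := chain_telescope h h1 j0 (le_of_lt hij) hjN
  obtain ⟨hN, hcC, hx0, hxN, hx0c, hxNc, hmid, ht0, hstep⟩ := h
  set d := j0 - i0 with hd
  set N' := N - d with hN'
  have hdd : N' + d = N := by omega
  have hiN' : i0 ≤ N' := by omega
  refine ⟨fun k => if k ≤ i0 then c k else c (k + d),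
          fun k => if k < i0 then x k else x (k + d),
          fun k => if k < i0 then t k else if k = i0 then (fun m => ∑ l ∈ Finset.Icc i0 j0, t l m) else t (k + d),
          ?_, ?_, ?_, ?_, ?_, ?_, ?_, ?_, ?_⟩
  · omega
  · intro i hi1 hi2
    by_cases hi : i ≤ i0
    · simp only [if_pos hi]; exact hcC i hi1 (by omega)
    · simp only [if_neg hi]; exact hcC (i + d) (by omega) (by omega)
  · simp only [if_pos (by omega : 0 < i0)]; exact hx0
  · simp only [if_neg (by omega : ¬ N' < i0)]
    rw [hdd]; exact hxN
  · simp only [if_pos (by omega : 0 < i0), if_pos h1]; exact hx0c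
  · by_cases hNi : N' ≤ i0
    · have e1 : N' = i0 := le_antisymm hNi hiN'
      have e2 : j0 = N := by omega
      simp only [if_neg (by omega : ¬ N' < i0), if_pos hNi, e1, hcc, e2]
      have e3 : i0 + d = N := by omega
      rw [e3]; simpa using hxNc
    · simp only [if_neg (by omega : ¬ N' < i0), if_neg hNi, hdd]
      exact hxNc
  · intro i hi1 hi2
    rcases lt_trichotomy i i0 with hi | hi | hi
    · simp only [if_pos hi, if_pos (by omega : i ≤ i0), if_pos (by omega : i + 1 ≤ i0)]
      exact hmid i hi1 (by omega)
    · subst hi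
      simp only [if_neg (lt_irrefl i), if_pos (le_refl i), if_neg (by omega : ¬ i + 1 ≤ i)]
      have hj : i + d = j0 := by omega
      rw [hj, hcc]
      have : i + 1 + d = j0 + 1 := by omega
      rw [this]
      exact hmid j0 (by omega) (by omega)
    · simp only [if_neg (by omega : ¬ i < i0), if_neg (by omega : ¬ i ≤ i0),
        if_neg (by omega : ¬ i + 1 ≤ i0)]
      have : i + 1 + d = i + d + 1 := by omega
      rw [this]
      exact hmid (i + d) (by omega) (by omega)
  · intro i m
    by_cases hi : i < i0
    · simp only [if_pos hi]; exact ht0 i m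
    · by_cases hi' : i = i0
      · simp only [if_neg hi, if_pos hi']
        exact Finset.sum_nonneg fun l _ => ht0 l m
      · simp only [if_neg hi, if_neg hi']; exact ht0 (i + d) m
  · intro i hi1 hi2
    rcases lt_trichotomy i i0 with hi | hi | hi
    · simp only [if_pos hi, if_pos (by omega : i - 1 < i0)]
      exact hstep i hi1 (by omega)
    · subst hi
      simp only [if_neg (lt_irrefl i), if_pos (by omega : i - 1 < i), if_pos rfl]
      have hj : i + d = j0 := by omega
      rw [hj]
      exact htel
    · simp only [if_neg (by omega : ¬ i < i0), if_neg (by omega : ¬ i - 1 < i0),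
        if_neg (by omega : ¬ i = i0)]
      have : i - 1 + d = i + d - 1 := by omega
      rw [this]
      exact hstep (i + d) (by omega) (by omega)

/-- Extending a chain along a safe straight segment. -/
lemma chain_segment {S : Set (Fin n → ℝ)} {C : Set (Set (Fin n → ℝ))}
    (hC : IsCellCover S C) {R : M → Fin n → ℝ} {xs y : Fin n → ℝ} (m : M) {T : ℝ}
    (hT : 0 ≤ T) (hsafe : ∀ τ ∈ Set.Icc (0 : ℝ) T, y + τ • R m ∈ S)
    (h : ChainEx C R xs y) : ChainEx C R xs (y + T • R m) := by
  classical
  set f : ℝ → (Fin n → ℝ) := fun τ => y + τ • R m with hf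
  have hfc : Continuous f := by continuity
  have hcov : Set.Icc (0:ℝ) T ⊆ ⋃ c : C, f ⁻¹' (c : Set (Fin n → ℝ)) := by
    intro τ hτ
    have : f τ ∈ S := hsafe τ hτ
    rw [← hC.2] at this
    obtain ⟨c, hcC, hfc'⟩ := this
    exact Set.mem_iUnion.mpr ⟨⟨c, hcC⟩, hfc'⟩
  obtain ⟨δ, hδ, hball⟩ := lebesgue_number_lemma_of_metric isCompact_Icc
    (fun c : C => ((hC.1 c c.2).1.preimage hfc)) hcov
  have key : ∀ k : ℕ, ChainEx C R xs (f (min T (k * (δ/2)))) := by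
    intro k
    induction k with
    | zero => simpa [hf, min_eq_right hT] using h
    | succ k ih =>
      set a := min T (k * (δ/2)) with ha
      set b := min T ((k+1 : ℕ) * (δ/2)) with hb
      have hδ2 : 0 < δ/2 := by linarith
      have haI : a ∈ Set.Icc (0:ℝ) T := by
        constructor
        · exact le_min hT (by positivity)
        · exact min_le_left _ _
      have hbI : b ∈ Set.Icc (0:ℝ) T := by
        constructor
        · exact le_min hT (by positivity)
        · exact min_le_left _ _
      have hab : a ≤ b := by
        apply min_le_min (le_refl T)
        have : (k : ℝ) ≤ (k+1 : ℕ) := by push_cast; linarith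
        nlinarith
      have hba : b - a ≤ δ/2 := by
        rcases le_or_gt T ((k : ℝ) * (δ/2)) with hc | hc
        · have haT : a = T := min_eq_left hc
          have hbT : b = T := min_eq_left (le_trans hc (by push_cast; nlinarith))
          rw [haT, hbT]; linarith
        · have ha' : a = (k : ℝ) * (δ/2) := min_eq_right (le_of_lt hc)
          have : b ≤ ((k:ℝ)+1) * (δ/2) := by
            rw [hb]; push_cast; exact min_le_right _ _
          rw [ha']; nlinarith
      obtain ⟨c, hsub⟩ := hball a haI
      have hfa : f a ∈ (c : Set (Fin n → ℝ)) := hsub (Metric.mem_ball_self hδ)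
      have hfb : f b ∈ (c : Set (Fin n → ℝ)) := by
        apply hsub
        rw [Metric.mem_ball, Real.dist_eq, abs_of_nonneg (by linarith)]
        linarith
      have hs' : ∀ m' : M, 0 ≤ (if m' = m then b - a else 0) := by
        intro m'; by_cases h' : m' = m
        · simp only [h', if_pos]; linarith
        · simp [h']
      refine chain_append ih c.2 hfa hfb (s := fun m' => if m' = m then b - a else 0) hs' ?_
      have : ∑ m' : M, (if m' = m then b - a else 0) • R m' = (b - a) • R m := by
        rw [Finset.sum_eq_single m]
        · simp
        · intro b' _ hb'; simp [hb']
        · intro hm; simp at hm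
      rw [this, hf]
      simp only
      rw [sub_smul]
      abel
  obtain ⟨k, hk⟩ := exists_nat_ge (T / (δ/2))
  have hδ2 : 0 < δ/2 := by linarith
  have hTk : T ≤ k * (δ/2) := by
    rw [div_le_iff₀ hδ2] at hk; linarith
  have := key k
  rwa [min_eq_left hTk] at this

/-- Traversing a safe schedule yields a chain. -/
lemma chain_sched {S : Set (Fin n → ℝ)} {C : Set (Set (Fin n → ℝ))}
    (hC : IsCellCover S C) {R : M → Fin n → ℝ} {xs : Fin n → ℝ} :
    ∀ (σ : List (M × ℝ)) (y : Fin n → ℝ), (∀ p ∈ σ, 0 ≤ p.2) → SafeSched R S y σ →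
      ChainEx C R xs y → ChainEx C R xs (runEnd R y σ)
  | [], y, _, _, h => h
  | (m, T) :: σ, y, hpos, hsafe, h => by
    have h' := chain_segment hC m (hpos (m, T) List.mem_cons_self) hsafe.1 h
    exact chain_sched hC σ (y + T • R m)
      (fun p hp => hpos p (List.mem_cons_of_mem _ hp)) hsafe.2 h'

end ChainAux

/-- If there is a finite `S`-safe schedule from `x_s` to `x_t` (for `S` open with cell
cover `C`), then there is a witness channel whose cells all belong to `C` and are
pairwise distinct; in particular, if `C` is finite then its length is at most `|C|`. -/
theorem stmt6 {M : Type*} [Fintype M] [Nonempty M] {n : ℕ} (hn : 0 < n)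
    (R : M → (Fin n → ℝ)) (S : Set (Fin n → ℝ)) (hSopen : IsOpen S)
    (C : Set (Set (Fin n → ℝ))) (hC : IsCellCover S C)
    (xs xt : Fin n → ℝ) (hxs : xs ∈ S) (hxt : xt ∈ S)
    (hsched : ∃ σ : List (M × ℝ),
      (∀ p ∈ σ, 0 ≤ p.2) ∧ SafeSched R S xs σ ∧ runEnd R xs σ = xt) :
    ∃ (N : ℕ) (c : ℕ → Set (Fin n → ℝ)), IsChannel S N c ∧
      (∀ i, 1 ≤ i → i ≤ N → c i ∈ C) ∧
      (∀ i j, 1 ≤ i → i ≤ N → 1 ≤ j → j ≤ N → i ≠ j → c i ≠ c j) ∧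
      IsWitness R xs xt N c ∧
      (∀ hfin : C.Finite, N ≤ hfin.toFinset.card) := by
  classical
  obtain ⟨σ, hpos, hsafe, hend⟩ := hsched
  have hxs' : xs ∈ ⋃₀ C := by rw [hC.2]; exact hxs
  obtain ⟨c0, hc0, hxc0⟩ := hxs'
  have hch : ChainEx C R xs xt := by
    have := chain_sched hC σ xs hpos hsafe (chain_single hc0 hxc0)
    rwa [hend] at this
  have hex : ∃ N, ∃ c x t, ChainTo C R xs xt N c x t := hch
  obtain ⟨c, x, t, hchain⟩ := Nat.find_spec hex
  set N := Nat.find hex with hNdef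
  have hN1 : 1 ≤ N := hchain.1
  have hdist : ∀ i j, 1 ≤ i → i ≤ N → 1 ≤ j → j ≤ N → i ≠ j → c i ≠ c j := by
    intro i j hi1 hi2 hj1 hj2 hne hceq
    rcases hne.lt_or_gt with hlt | hlt
    · obtain ⟨c', x', t', h'⟩ := chain_shorten hchain hi1 hlt hj2 hceq
      exact Nat.find_min hex (by omega) ⟨c', x', t', h'⟩
    · obtain ⟨c', x', t', h'⟩ := chain_shorten hchain hj1 hlt hi2 hceq.symm
      exact Nat.find_min hex (by omega) ⟨c', x', t', h'⟩
  obtain ⟨_, hcC, hx0, hxN, hx0c, hxNc, hmid, ht0, hstep⟩ := hchain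
  refine ⟨N, c, ⟨hN1, fun i h1 h2 => hC.1 _ (hcC i h1 h2),
      fun i h1 h2 => ⟨x i, hmid i h1 h2⟩⟩, hcC, hdist,
      ⟨x, hx0, hxN, hx0c, hxNc, hmid, t, ht0, hstep⟩, ?_⟩
  intro hfin
  have hcard : (Finset.Icc 1 N).card ≤ hfin.toFinset.card := by
    apply Finset.card_le_card_of_injOn c
    · intro i hi
      rw [Finset.mem_coe, Set.Finite.mem_toFinset]
      exact hcC i (Finset.mem_Icc.mp hi).1 (Finset.mem_Icc.mp hi).2
    · intro i hi j hj hcij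
      by_contra hne
      exact hdist i j (Finset.mem_Icc.mp (Finset.mem_coe.mp hi)).1
        (Finset.mem_Icc.mp (Finset.mem_coe.mp hi)).2
        (Finset.mem_Icc.mp (Finset.mem_coe.mp hj)).1
        (Finset.mem_Icc.mp (Finset.mem_coe.mp hj)).2 hne hcij
  simpa [Nat.card_Icc] using hcard
end

section
/- Let O_1, …, O_k ⊆ ℝⁿ be finitely many closed convex polytopes, each of the form {x ∈ ℝⁿ : A x ≤ b} for some real matrix A and vector b, and let S = ℝⁿ \ (O_1 ∪ … ∪ O_k). Then S admits a finite cell cover: there exist finitely many open convex sets c_1, …, c_N, each contained in S, whose union equals S. -/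
/-- If `O 0, …, O (k-1)` are closed convex polytopes (each given by a finite system of
linear inequalities `A x ≤ b`), then the complement `S = ℝⁿ \ (O 0 ∪ … ∪ O (k-1))`
admits a finite cell cover: finitely many open convex subsets of `S` whose union is `S`. -/
theorem stmt7 {n : ℕ} (hn : 0 < n) (k : ℕ) (O : Fin k → Set (Fin n → ℝ))
    (hO : ∀ i, ∃ (m : ℕ) (A : Matrix (Fin m) (Fin n) ℝ) (b : Fin m → ℝ),
      O i = {x | ∀ r, A.mulVec x r ≤ b r}) :
    ∃ (N : ℕ) (c : Fin N → Set (Fin n → ℝ)),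
      (∀ j, IsCell (⋃ i, O i)ᶜ (c j)) ∧ (⋃ j, c j) = (⋃ i, O i)ᶜ := by
  choose m A b hAb using hO
  have hlin : ∀ (i : Fin k) (r : Fin (m i)),
      IsLinearMap ℝ (fun x : Fin n → ℝ => (A i).mulVec x r) := by
    intro i r
    constructor
    · intro x y; simp [Matrix.mulVec_add]
    · intro c x; simp [Matrix.mulVec_smul]
  let T := ∀ i : Fin k, Fin (m i)
  let e : Fin (Fintype.card T) ≃ T := (Fintype.equivFin T).symm
  refine ⟨Fintype.card T,
    fun j => ⋂ i, {x : Fin n → ℝ | b i (e j i) < (A i).mulVec x (e j i)}, ?_, ?_⟩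
  · intro j
    refine ⟨?_, ?_, ?_⟩
    · apply isOpen_iInter_of_finite
      intro i
      have : {x : Fin n → ℝ | b i (e j i) < (A i).mulVec x (e j i)}
          = ((hlin i (e j i)).mk' _) ⁻¹' Set.Ioi (b i (e j i)) := rfl
      rw [this]
      exact (isOpen_Ioi).preimage ((hlin i (e j i)).mk' _).continuous_of_finiteDimensional
    · exact convex_iInter fun i => convex_halfSpace_gt (hlin i (e j i)) _
    · intro x hx
      simp only [Set.mem_iInter, Set.mem_setOf_eq] at hx
      simp only [Set.mem_compl_iff, Set.mem_iUnion, not_exists]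
      intro i hi
      rw [hAb i] at hi
      exact absurd (hi (e j i)) (not_le.mpr (hx i))
  · apply Set.eq_of_subset_of_subset
    · intro x hx
      simp only [Set.mem_iUnion] at hx
      obtain ⟨j, hj⟩ := hx
      simp only [Set.mem_iInter, Set.mem_setOf_eq] at hj
      simp only [Set.mem_compl_iff, Set.mem_iUnion, not_exists]
      intro i hi
      rw [hAb i] at hi
      exact absurd (hi (e j i)) (not_le.mpr (hj i))
    · intro x hx
      simp only [Set.mem_compl_iff, Set.mem_iUnion, not_exists] at hx
      have hf : ∀ i : Fin k, ∃ r : Fin (m i), b i r < (A i).mulVec x r := by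
        intro i
        have := hx i
        rw [hAb i] at this
        simp only [Set.mem_setOf_eq, not_forall, not_le] at this
        exact this
      choose f hf using hf
      refine Set.mem_iUnion.mpr ⟨e.symm f, ?_⟩
      simp only [Set.mem_iInter, Set.mem_setOf_eq]
      intro i
      have : e (e.symm f) = f := e.apply_symm_apply f
      rw [this]
      exact hf i
end
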